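/- For fixed z > 0, ∫_0^π e^{t z cos θ} dθ ∼ e^{tz} √(π/(2tz)) as t → ∞ (Laplace's method at the endpoint maximum θ = 0). -/

import Mathlib

open Filter MeasureTheory Set

/-- pointwise splitting of the exponential -/
lemma exp_split_aux (t z θ : ℝ) :
    Real.exp (t * z * Real.cos θ)
      = Real.exp (t * z) * Real.exp (-(2 * t * z) * Real.sin (θ / 2) ^ 2) := by
  rw [← Real.exp_add]
  congr 1
  have h1 : Real.sin (θ / 2) ^ 2 = 1 - Real.cos (θ / 2) ^ 2 := Real.sin_sq _
  have h2 : Real.cos (θ / 2) ^ 2 = 1 / 2 + Real.cos θ / 2 := by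
    have := Real.cos_sq (θ / 2)
    rwa [mul_div_cancel₀ θ (two_ne_zero)] at this
  rw [h1, h2]; ring

lemma sqrt_tendsto_atTop : Tendsto Real.sqrt atTop atTop := by
  apply tendsto_atTop_atTop_of_monotone (fun a b h => Real.sqrt_le_sqrt h)
  intro b
  exact ⟨b ^ 2, by rw [Real.sqrt_sq_eq_abs]; exact le_abs_self b⟩

lemma sin_div_tendsto : Tendsto (fun x : ℝ => Real.sin x / x) (nhdsWithin 0 {0}ᶜ) (nhds 1) := by
  have h := hasDerivAt_iff_tendsto_slope.1 (Real.hasDerivAt_sin 0)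
  rw [Real.cos_zero] at h
  refine h.congr (fun x => ?_)
  simp [slope_def_field]

/-- The main dominated-convergence limit. -/
lemma laplace_aux (z : ℝ) (hz : 0 < z) :
    Tendsto (fun t : ℝ => ∫ v in Ioi (0 : ℝ),
        (Ioc (0 : ℝ) (Real.pi / 2 * Real.sqrt (2 * t * z))).indicator
          (fun v => Real.exp (-(2 * t * z) * Real.sin (v / Real.sqrt (2 * t * z)) ^ 2)) v)
      atTop (nhds (Real.sqrt Real.pi / 2)) := by
  have pi_pos := Real.pi_pos
  have key : Tendsto (fun t : ℝ => ∫ v in Ioi (0 : ℝ),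
        (Ioc (0 : ℝ) (Real.pi / 2 * Real.sqrt (2 * t * z))).indicator
          (fun v => Real.exp (-(2 * t * z) * Real.sin (v / Real.sqrt (2 * t * z)) ^ 2)) v)
      atTop (nhds (∫ v in Ioi (0 : ℝ), Real.exp (-(1 : ℝ) * v ^ 2))) := by
    apply MeasureTheory.tendsto_integral_filter_of_dominated_convergence
      (bound := fun v => Real.exp (-(4 / Real.pi ^ 2) * v ^ 2))
    · -- measurability
      refine Eventually.of_forall (fun t => ?_)
      have hc : Continuous (fun v : ℝ =>
          Real.exp (-(2 * t * z) * Real.sin (v / Real.sqrt (2 * t * z)) ^ 2)) := by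
        continuity
      exact ((hc.measurable.indicator measurableSet_Ioc).aestronglyMeasurable)
    · -- bound
      filter_upwards [eventually_ge_atTop (1 : ℝ)] with t ht
      refine Eventually.of_forall (fun v => ?_)
      by_cases hv : v ∈ Ioc (0 : ℝ) (Real.pi / 2 * Real.sqrt (2 * t * z))
      · rw [indicator_of_mem hv]
        have ha : (0 : ℝ) < 2 * t * z := by nlinarith
        set s := Real.sqrt (2 * t * z) with hs
        have hs0 : 0 < s := Real.sqrt_pos.mpr ha
        have hss : s ^ 2 = 2 * t * z := Real.sq_sqrt ha.le
        set u := v / s with hu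
        have hu0 : 0 < u := div_pos hv.1 hs0
        have hu2 : u ≤ Real.pi / 2 := by
          rw [hu, div_le_iff₀ hs0]
          exact hv.2
        have hsin : 2 / Real.pi * u ≤ Real.sin u := Real.mul_le_sin hu0.le hu2
        have hsq : (2 / Real.pi * u) ^ 2 ≤ Real.sin u ^ 2 := by
          apply pow_le_pow_left₀ (by positivity) hsin
        have hv' : s * u = v := mul_div_cancel₀ v hs0.ne'
        have hkey : 4 / Real.pi ^ 2 * v ^ 2 ≤ 2 * t * z * Real.sin u ^ 2 := by
          have h1 : 2 * t * z * (2 / Real.pi * u) ^ 2 ≤ 2 * t * z * Real.sin u ^ 2 :=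
            mul_le_mul_of_nonneg_left hsq ha.le
          calc 4 / Real.pi ^ 2 * v ^ 2 = 4 / Real.pi ^ 2 * (s * u) ^ 2 := by rw [hv']
            _ = s ^ 2 * (2 / Real.pi * u) ^ 2 := by
                field_simp
                ring
            _ = 2 * t * z * (2 / Real.pi * u) ^ 2 := by rw [hss]
            _ ≤ 2 * t * z * Real.sin u ^ 2 := h1
        rw [Real.norm_eq_abs, abs_of_pos (Real.exp_pos _)]
        apply Real.exp_le_exp.mpr
        nlinarith
      · rw [indicator_of_notMem hv]
        simp only [norm_zero]
        positivity
    · -- integrability of bound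
      exact (integrable_exp_neg_mul_sq (by positivity)).restrict
    · -- pointwise limit
      apply ae_restrict_of_forall_mem measurableSet_Ioi
      intro v hv
      replace hv : (0 : ℝ) < v := hv
      -- the inner value tends to exp (-v^2)
      have hsqrt : Tendsto (fun t : ℝ => Real.sqrt (2 * t * z)) atTop atTop := by
        apply sqrt_tendsto_atTop.comp
        have : Tendsto (fun t : ℝ => (2 * z) * t) atTop atTop :=
          Tendsto.const_mul_atTop (by positivity) tendsto_id
        exact this.congr (fun t => by ring)
      have hx : Tendsto (fun t : ℝ => v / Real.sqrt (2 * t * z)) atTop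
          (nhdsWithin 0 {0}ᶜ) := by
        rw [tendsto_nhdsWithin_iff]
        constructor
        · exact Tendsto.div_atTop tendsto_const_nhds hsqrt
        · filter_upwards [hsqrt.eventually_gt_atTop 0] with t ht
          exact (div_pos hv ht).ne'
      have h1 : Tendsto (fun t : ℝ =>
          Real.sin (v / Real.sqrt (2 * t * z)) / (v / Real.sqrt (2 * t * z)))
          atTop (nhds 1) := sin_div_tendsto.comp hx
      have h2 : Tendsto (fun t : ℝ =>
          v * (Real.sin (v / Real.sqrt (2 * t * z)) / (v / Real.sqrt (2 * t * z))))
          atTop (nhds v) := by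
        simpa using h1.const_mul v
      have h3 : Tendsto (fun t : ℝ =>
          Real.exp (-(v * (Real.sin (v / Real.sqrt (2 * t * z)) /
            (v / Real.sqrt (2 * t * z)))) ^ 2)) atTop (nhds (Real.exp (-(1:ℝ) * v ^ 2))) := by
        have hsq : Tendsto (fun t : ℝ =>
            -(v * (Real.sin (v / Real.sqrt (2 * t * z)) /
              (v / Real.sqrt (2 * t * z)))) ^ 2) atTop (nhds (-(1:ℝ) * v ^ 2)) := by
          have := (h2.pow 2).neg
          rw [show -(1:ℝ) * v ^ 2 = -v ^ 2 by ring]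
          exact this
        exact (Real.continuous_exp.tendsto _).comp hsq
      refine h3.congr' ?_
      -- eventual equality
      have hev : ∀ᶠ t : ℝ in atTop,
          v ≤ Real.pi / 2 * Real.sqrt (2 * t * z) ∧ 0 < 2 * t * z := by
        filter_upwards [hsqrt.eventually_ge_atTop (2 * v / Real.pi),
          eventually_gt_atTop (0 : ℝ)] with t h1' h2'
        constructor
        · calc v = Real.pi / 2 * (2 * v / Real.pi) := by field_simp
            _ ≤ Real.pi / 2 * Real.sqrt (2 * t * z) := by
                apply mul_le_mul_of_nonneg_left h1' (by positivity)
        · positivity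
      filter_upwards [hev] with t htpair
      obtain ⟨htv, hta⟩ := htpair
      have hs0 : 0 < Real.sqrt (2 * t * z) := Real.sqrt_pos.mpr hta
      have hss : Real.sqrt (2 * t * z) ^ 2 = 2 * t * z := Real.sq_sqrt hta.le
      have hx0 : v / Real.sqrt (2 * t * z) ≠ 0 := (div_pos hv hs0).ne'
      have harg : -(v * (Real.sin (v / Real.sqrt (2 * t * z)) /
          (v / Real.sqrt (2 * t * z)))) ^ 2
          = -(2 * t * z) * Real.sin (v / Real.sqrt (2 * t * z)) ^ 2 := by
        rw [div_div_eq_mul_div, mul_div_cancel₀ _ hv.ne', mul_pow, hss]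
        ring
      rw [harg]
      have hmem : v ∈ Ioc (0 : ℝ) (Real.pi / 2 * Real.sqrt (2 * t * z)) :=
        Set.mem_Ioc.mpr ⟨hv, htv⟩
      rw [Set.indicator_of_mem hmem]
  have : (∫ v in Ioi (0 : ℝ), Real.exp (-(1 : ℝ) * v ^ 2)) = Real.sqrt Real.pi / 2 := by
    rw [integral_gaussian_Ioi]
    norm_num
  rwa [this] at key

theorem laplace_method_bessel (z : ℝ) (hz : 0 < z) :
    Tendsto
      (fun t : ℝ => (∫ θ in (0:ℝ)..Real.pi, Real.exp (t * z * Real.cos θ))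
        / (Real.exp (t * z) * Real.sqrt (Real.pi / (2 * t * z)))) atTop (nhds 1) := by
  have pi_pos := Real.pi_pos
  have hπ : Real.sqrt Real.pi ≠ 0 := by positivity
  -- the limit of 2 * M t / √π
  have hM := laplace_aux z hz
  have hlim : Tendsto (fun t : ℝ => 2 * (∫ v in Ioi (0 : ℝ),
      (Ioc (0 : ℝ) (Real.pi / 2 * Real.sqrt (2 * t * z))).indicator
        (fun v => Real.exp (-(2 * t * z) * Real.sin (v / Real.sqrt (2 * t * z)) ^ 2)) v)
      / Real.sqrt Real.pi) atTop (nhds 1) := by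
    have h := (hM.const_mul 2).div_const (Real.sqrt Real.pi)
    have : 2 * (Real.sqrt Real.pi / 2) / Real.sqrt Real.pi = 1 := by
      field_simp
    rwa [this] at h
  refine hlim.congr' ?_
  filter_upwards [eventually_gt_atTop (0 : ℝ)] with t ht
  have ha : (0 : ℝ) < 2 * t * z := by positivity
  set s := Real.sqrt (2 * t * z) with hsdef
  have hs0 : 0 < s := Real.sqrt_pos.mpr ha
  set b := Real.pi / 2 * s with hbdef
  have hb0 : 0 < b := by positivity
  -- Step A: split off exp (t*z)
  have hA : (∫ θ in (0:ℝ)..Real.pi, Real.exp (t * z * Real.cos θ))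
      = Real.exp (t * z) * ∫ θ in (0:ℝ)..Real.pi,
          Real.exp (-(2 * t * z) * Real.sin (θ / 2) ^ 2) := by
    rw [← intervalIntegral.integral_const_mul]
    apply intervalIntegral.integral_congr
    intro θ _
    exact exp_split_aux t z θ
  -- Step B: θ = 2u
  have hB : (∫ θ in (0:ℝ)..Real.pi, Real.exp (-(2 * t * z) * Real.sin (θ / 2) ^ 2))
      = 2 * ∫ u in (0:ℝ)..Real.pi / 2, Real.exp (-(2 * t * z) * Real.sin u ^ 2) := by
    have := intervalIntegral.integral_comp_div (a := 0) (b := Real.pi)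
      (fun u => Real.exp (-(2 * t * z) * Real.sin u ^ 2)) (two_ne_zero)
    rw [this]
    norm_num
  -- Step C: u = v / s
  have hC : (∫ u in (0:ℝ)..Real.pi / 2, Real.exp (-(2 * t * z) * Real.sin u ^ 2))
      = s⁻¹ * ∫ v in (0:ℝ)..b, Real.exp (-(2 * t * z) * Real.sin (v / s) ^ 2) := by
    have := intervalIntegral.integral_comp_div (a := 0) (b := b)
      (fun u => Real.exp (-(2 * t * z) * Real.sin u ^ 2)) hs0.ne'
    rw [this]
    have h0 : (0 : ℝ) / s = 0 := zero_div s
    have hb : b / s = Real.pi / 2 := by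
      rw [hbdef]; field_simp
    rw [h0, hb, smul_eq_mul, ← mul_assoc, inv_mul_cancel₀ hs0.ne', one_mul]
  -- Step D: to indicator integral
  have hD : (∫ v in (0:ℝ)..b, Real.exp (-(2 * t * z) * Real.sin (v / s) ^ 2))
      = ∫ v in Ioi (0 : ℝ), (Ioc (0 : ℝ) b).indicator
          (fun v => Real.exp (-(2 * t * z) * Real.sin (v / s) ^ 2)) v := by
    rw [intervalIntegral.integral_of_le hb0.le,
      MeasureTheory.setIntegral_indicator measurableSet_Ioc,
      Set.inter_eq_right.mpr Ioc_subset_Ioi_self]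
  rw [hA, hB, hC, hD]
  have hsqrt : Real.sqrt (Real.pi / (2 * t * z)) = Real.sqrt Real.pi / s :=
    Real.sqrt_div pi_pos.le _
  rw [hsqrt]
  have he : Real.exp (t * z) ≠ 0 := (Real.exp_pos _).ne'
  field_simp
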